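/- Let α₁ ≠ α₂ ∈ ℂ, κ₁, κ₂ ∈ ℂ∖{0}, and let L ⊆ (ℂ∖{0})² be the image of the map z ↦ (κ₁(z−α₁), κ₂(z−α₂)) defined on ℂ∖{α₁,α₂}. Then there exists a point v ∈ ℝ² and a map φ : L → Γ_v such that ‖Log(q) − φ(q)‖_∞ ≤ 2 log 2 for every q ∈ L. Moreover, if κ₁ = κ₂, then v can be chosen on the diagonal {(t,t) : t ∈ ℝ}. -/

import Mathlib

/-- Coordinate-wise logarithm of moduli, `Log(z)_i = log |z_i|`. -/
noncomputable def LogMap {n : ℕ} (z : Fin n → ℂ) : Fin n → ℝ :=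
  fun i => Real.log (‖z i‖)

/-- Ray emanating from `v` in direction `d`. -/
def ray {n : ℕ} (v d : Fin n → ℝ) : Set (Fin n → ℝ) :=
  {x | ∃ t : ℝ, 0 ≤ t ∧ x = v + t • d}

/-- Standard tropical line in `ℝ²` with vertex `v`: three rays in directions
`(-1,0)`, `(0,-1)` and `(1,1)`. -/
noncomputable def stdTropLine (v : Fin 2 → ℝ) : Set (Fin 2 → ℝ) :=
  ray v ![-1, 0] ∪ ray v ![0, -1] ∪ ray v ![1, 1]

/-- Auxiliary projection onto the standard tropical line with vertex `v`. -/
noncomputable def projTrop (v x : Fin 2 → ℝ) : Fin 2 → ℝ :=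
  if x 0 - v 0 ≤ x 1 - v 1 then
    if x 0 - v 0 ≤ 0 then ![x 0, v 1] else ![x 0, v 1 + (x 0 - v 0)]
  else
    if x 1 - v 1 ≤ 0 then ![v 0, x 1] else ![v 0 + (x 1 - v 1), x 1]

lemma projTrop_mem (v x : Fin 2 → ℝ) : projTrop v x ∈ stdTropLine v := by
  unfold projTrop stdTropLine
  split_ifs with h1 h2 h3
  · exact Or.inl (Or.inl ⟨-(x 0 - v 0), by linarith, by
      funext i; fin_cases i <;> simp⟩)
  · exact Or.inr ⟨x 0 - v 0, by linarith, by
      funext i; fin_cases i <;> simp⟩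
  · exact Or.inl (Or.inr ⟨-(x 1 - v 1), by linarith, by
      funext i; fin_cases i <;> simp⟩)
  · exact Or.inr ⟨x 1 - v 1, by linarith, by
      funext i; fin_cases i <;> simp⟩

lemma logdiff_le {u w : ℝ} (hu : 0 < u) (hw : 0 < w) (h : u ≤ 2 * w) :
    Real.log u - Real.log w ≤ Real.log 2 := by
  have h2 : Real.log u ≤ Real.log (2 * w) := Real.log_le_log hu h
  rw [Real.log_mul two_ne_zero hw.ne'] at h2
  linarith

/-- For the complex line `L ⊆ (ℂ*)²` parametrised by
`z ↦ (κ₁(z-α₁), κ₂(z-α₂))` there exist a vertex `v ∈ ℝ²` and a map `φ : L → Γ_v`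
with `‖Log(q) - φ(q)‖_∞ ≤ 2 log 2` for all `q ∈ L`; moreover if `κ₁ = κ₂`
(calibrated case) then `v` can be chosen on the diagonal. -/
theorem stmt_3 (α₁ α₂ : ℂ) (hα : α₁ ≠ α₂) (κ₁ κ₂ : ℂ) (hκ₁ : κ₁ ≠ 0) (hκ₂ : κ₂ ≠ 0) :
    ∃ (v : Fin 2 → ℝ) (φ : (Fin 2 → ℂ) → (Fin 2 → ℝ)),
      (∀ q ∈ (fun z : ℂ => ![κ₁ * (z - α₁), κ₂ * (z - α₂)]) ''
          {z : ℂ | z ≠ α₁ ∧ z ≠ α₂},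
        φ q ∈ stdTropLine v ∧ ‖LogMap q - φ q‖ ≤ 2 * Real.log 2) ∧
      (κ₁ = κ₂ → v 0 = v 1) := by
  have hc : (0:ℝ) < ‖α₂ - α₁‖ :=
    norm_pos_iff.mpr (sub_ne_zero.mpr (Ne.symm hα))
  set c := ‖α₂ - α₁‖ with hc_def
  set v : Fin 2 → ℝ :=
    ![Real.log (‖κ₁‖ * c), Real.log (‖κ₂‖ * c)] with hv
  have hlog2 : (0:ℝ) ≤ Real.log 2 := Real.log_nonneg one_le_two
  refine ⟨v, fun q => projTrop v (LogMap q), ?_, ?_⟩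
  · rintro q ⟨z, ⟨hz1, hz2⟩, rfl⟩
    refine ⟨projTrop_mem _ _, ?_⟩
    have hk1 : (0:ℝ) < ‖κ₁‖ := norm_pos_iff.mpr hκ₁
    have hk2 : (0:ℝ) < ‖κ₂‖ := norm_pos_iff.mpr hκ₂
    have hr : (0:ℝ) < ‖z - α₁‖ := norm_pos_iff.mpr (sub_ne_zero.mpr hz1)
    have hs : (0:ℝ) < ‖z - α₂‖ := norm_pos_iff.mpr (sub_ne_zero.mpr hz2)
    set r := ‖z - α₁‖ with hr_def
    set s := ‖z - α₂‖ with hs_def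
    -- triangle inequalities
    have h1 : s ≤ r + c := by
      have := norm_sub_le_norm_sub_add_norm_sub z α₁ α₂
      rwa [norm_sub_rev α₁ α₂] at this
    have h2 : r ≤ s + c := norm_sub_le_norm_sub_add_norm_sub z α₂ α₁
    have h3 : c ≤ s + r := by
      have := norm_sub_le_norm_sub_add_norm_sub α₂ z α₁
      rwa [norm_sub_rev α₂ z] at this
    set X := LogMap ![κ₁ * (z - α₁), κ₂ * (z - α₂)] with hX
    have hX0 : X 0 = Real.log (‖κ₁‖) + Real.log r := by
      simp [hX, LogMap, map_mul, norm_mul, Real.log_mul hk1.ne' hr.ne']; exact Real.log_mul hk1.ne' hr.ne'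
    have hX1 : X 1 = Real.log (‖κ₂‖) + Real.log s := by
      simp [hX, LogMap, map_mul, norm_mul, Real.log_mul hk2.ne' hs.ne']; exact Real.log_mul hk2.ne' hs.ne'
    have hv0 : v 0 = Real.log (‖κ₁‖) + Real.log c := by
      simp [hv, Real.log_mul hk1.ne' hc.ne']
    have hv1 : v 1 = Real.log (‖κ₂‖) + Real.log c := by
      simp [hv, Real.log_mul hk2.ne' hc.ne']
    have ha : X 0 - v 0 = Real.log r - Real.log c := by rw [hX0, hv0]; ring
    have hb : X 1 - v 1 = Real.log s - Real.log c := by rw [hX1, hv1]; ring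
    have hn : ∀ (y : Fin 2 → ℝ), |y 0| ≤ 2 * Real.log 2 → |y 1| ≤ 2 * Real.log 2 →
        ‖y‖ ≤ 2 * Real.log 2 := by
      intro y hy0 hy1
      rw [pi_norm_le_iff_of_nonneg (by linarith)]
      intro i; fin_cases i <;> simpa [Real.norm_eq_abs]
    show ‖X - projTrop v X‖ ≤ 2 * Real.log 2
    unfold projTrop
    rw [ha, hb]
    split_ifs with hA hB hC
    · -- r ≤ s, r ≤ c : point (X0, v1), error (0, log s - log c)
      have hrs : r ≤ s := (Real.log_le_log_iff hr hs).mp (by linarith)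
      have hrc : r ≤ c := (Real.log_le_log_iff hr hc).mp (by linarith)
      apply hn
      · simp [Pi.sub_apply]; linarith
      · have e1 : Real.log s - Real.log c ≤ Real.log 2 :=
          logdiff_le hs hc (by linarith)
        have e2 : Real.log c - Real.log s ≤ Real.log 2 :=
          logdiff_le hc hs (by linarith)
        have : (X - ![X 0, v 1]) 1 = Real.log s - Real.log c := by
          simp [Pi.sub_apply]; rw [hX1, hv1]; ring
        rw [this, abs_le]; constructor <;> linarith
    · -- c < r ≤ s : point on diagonal ray, error (0, log s - log r)
      have hrs : r ≤ s := (Real.log_le_log_iff hr hs).mp (by linarith)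
      have hcr : c ≤ r := by
        by_contra hcon
        push_neg at hcon
        have := (Real.log_lt_log_iff hr hc).mpr hcon
        exact hB (by linarith)
      apply hn
      · have : (X - ![X 0, v 1 + (Real.log r - Real.log c)]) 0 = 0 := by
          simp [Pi.sub_apply]
        rw [this]; simpa using (by linarith : (0:ℝ) ≤ 2 * Real.log 2)
      · have e1 : Real.log s - Real.log r ≤ Real.log 2 :=
          logdiff_le hs hr (by linarith)
        have e2 : Real.log r ≤ Real.log s := by linarith
        have : (X - ![X 0, v 1 + (Real.log r - Real.log c)]) 1
            = Real.log s - Real.log r := by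
          simp [Pi.sub_apply]; rw [hX1, hv1]; ring
        rw [this, abs_le]; constructor <;> linarith
    · -- s < r, s ≤ c : point (v0, X1), error (log r - log c, 0)
      have hsr : s ≤ r := (Real.log_le_log_iff hs hr).mp (by linarith)
      have hsc : s ≤ c := (Real.log_le_log_iff hs hc).mp (by linarith)
      apply hn
      · have e1 : Real.log r - Real.log c ≤ Real.log 2 :=
          logdiff_le hr hc (by linarith)
        have e2 : Real.log c - Real.log r ≤ Real.log 2 :=
          logdiff_le hc hr (by linarith)
        have : (X - ![v 0, X 1]) 0 = Real.log r - Real.log c := by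
          simp [Pi.sub_apply]; rw [hX0, hv0]; ring
        rw [this, abs_le]; constructor <;> linarith
      · simp [Pi.sub_apply]; linarith
    · -- c < s < r : point on diagonal ray, error (log r - log s, 0)
      have hsr : s ≤ r := (Real.log_le_log_iff hs hr).mp (by linarith)
      have hcs : c ≤ s := by
        by_contra hcon
        push_neg at hcon
        have := (Real.log_lt_log_iff hs hc).mpr hcon
        exact hC (by linarith)
      apply hn
      · have e1 : Real.log r - Real.log s ≤ Real.log 2 :=
          logdiff_le hr hs (by linarith)
        have e2 : Real.log s ≤ Real.log r := by linarith
        have : (X - ![v 0 + (Real.log s - Real.log c), X 1]) 0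
            = Real.log r - Real.log s := by
          simp [Pi.sub_apply]; rw [hX0, hv0]; ring
        rw [this, abs_le]; constructor <;> linarith
      · have : (X - ![v 0 + (Real.log s - Real.log c), X 1]) 1 = 0 := by
          simp [Pi.sub_apply]
        rw [this]; simpa using (by linarith : (0:ℝ) ≤ 2 * Real.log 2)
  · intro h
    simp [hv, h]
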